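/- Let V be a real inner product space and f_1, ..., f_n ∈ V. The open cone C^o(f_1,...,f_n) = {λ_1 f_1 + ... + λ_n f_n : λ_i > 0 for all i} is closed (as a subset of V) if and only if 0 ∈ C^o(f_1,...,f_n). -/

import Mathlib

open RealInnerProductSpace Finset

/-- The open cone `C^o(f_1,...,f_n)` of strictly positive combinations is closed
if and only if `0` belongs to it. -/
theorem openCone_isClosed_iff_zero_mem
    (V : Type*) [NormedAddCommGroup V] [InnerProductSpace ℝ V] [FiniteDimensional ℝ V]
    (n : ℕ) (f : Fin n → V) :
    IsClosed {v : V | ∃ lam : Fin n → ℝ, (∀ i, 0 < lam i) ∧ v = ∑ i, lam i • f i} ↔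
      (0 : V) ∈ {v : V | ∃ lam : Fin n → ℝ, (∀ i, 0 < lam i) ∧ v = ∑ i, lam i • f i} := by
  constructor
  · intro hC
    have hmem : ∀ k : ℕ, (1/(k+1) : ℝ) • ∑ i, f i ∈
        {v : V | ∃ lam : Fin n → ℝ, (∀ i, 0 < lam i) ∧ v = ∑ i, lam i • f i} := by
      intro k
      refine ⟨fun _ => 1/(k+1), fun i => by positivity, ?_⟩
      rw [Finset.smul_sum]
    have htend : Filter.Tendsto (fun k : ℕ => (1/(k+1):ℝ) • ∑ i, f i)
        Filter.atTop (nhds 0) := by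
      have h : Filter.Tendsto (fun k : ℕ => 1 / ((k : ℝ) + 1)) Filter.atTop (nhds 0) :=
        tendsto_one_div_add_atTop_nhds_zero_nat
      have := h.smul_const (∑ i, f i)
      simpa using this
    exact hC.mem_of_tendsto htend (Filter.Eventually.of_forall hmem)
  · rintro ⟨μ, hμ, h0⟩
    have hSeq : {v : V | ∃ lam : Fin n → ℝ, (∀ i, 0 < lam i) ∧ v = ∑ i, lam i • f i}
        = (Submodule.span ℝ (Set.range f) : Set V) := by
      ext v
      constructor
      · rintro ⟨lam, _, rfl⟩
        exact Submodule.sum_mem _ fun i _ =>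
          Submodule.smul_mem _ _ (Submodule.subset_span ⟨i, rfl⟩)
      · intro hv
        obtain ⟨c, hc⟩ := (Submodule.mem_span_range_iff_exists_fun ℝ).mp hv
        set t : ℝ := 1 + ∑ i, |c i| / μ i with ht
        refine ⟨fun i => c i + t * μ i, ?_, ?_⟩
        · intro j
          have h1 : |c j| / μ j ≤ ∑ i, |c i| / μ i :=
            Finset.single_le_sum (f := fun i => |c i| / μ i) (fun i _ => div_nonneg (abs_nonneg _) (hμ i).le) (Finset.mem_univ j)
          have h2 : |c j| / μ j * μ j = |c j| := div_mul_cancel₀ _ (hμ j).ne'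
          have h3 : t * μ j = μ j + (∑ i, |c i| / μ i) * μ j := by rw [ht]; ring
          have h4 : |c j| ≤ (∑ i, |c i| / μ i) * μ j := by
            rw [← h2]; exact mul_le_mul_of_nonneg_right h1 (hμ j).le
          have h5 : -c j ≤ |c j| := neg_le_abs _
          show 0 < c j + t * μ j
          clear_value t
          linarith [hμ j]
        · have : ∑ i, (c i + t * μ i) • f i
              = (∑ i, c i • f i) + t • ∑ i, μ i • f i := by
            rw [Finset.smul_sum, ← Finset.sum_add_distrib]
            congr 1; ext i; rw [add_smul, mul_smul]
          rw [this, hc, ← h0, smul_zero, add_zero]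
    rw [hSeq]
    exact (Submodule.span ℝ (Set.range f)).closed_of_finiteDimensional
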